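/- If α < β, then there exists exactly one index ℓ ∈ {0,…,k−1} such that m_ℓ = 0. -/

import Mathlib

open Finset

lemma sum_digits_lt' (d : ℕ) (hd : 2 ≤ d) (n : ℕ) (f : ℕ → ℕ) (hf : ∀ i < n, f i < d) :
    ∑ i ∈ range n, f i * d ^ i < d ^ n := by
  induction n with
  | zero => simp
  | succ n ih =>
    rw [Finset.sum_range_succ]
    have h1 : ∑ i ∈ range n, f i * d ^ i < d ^ n :=
      ih (fun i hi => hf i (hi.trans (Nat.lt_succ_self n)))
    have h2 : f n * d ^ n ≤ (d - 1) * d ^ n :=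
      Nat.mul_le_mul_right _ (Nat.le_sub_one_of_lt (hf n (Nat.lt_succ_self n)))
    have h3 : (d - 1) * d ^ n = d * d ^ n - d ^ n := by rw [Nat.sub_one_mul]
    have h4 : d ^ n ≤ d * d ^ n := Nat.le_mul_of_pos_left _ (by omega)
    have h5 : d ^ (n + 1) = d * d ^ n := by rw [pow_succ]; ring
    omega

lemma digits_eq' (d : ℕ) (hd : 2 ≤ d) :
    ∀ (n : ℕ) (f g : ℕ → ℕ), (∀ i < n, f i < d) → (∀ i < n, g i < d) →
    (∑ i ∈ range n, f i * d ^ i = ∑ i ∈ range n, g i * d ^ i) →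
    ∀ i < n, f i = g i := by
  intro n
  induction n with
  | zero => intro f g _ _ _ i hi; omega
  | succ n ih =>
    intro f g hf hg h i hi
    rw [Finset.sum_range_succ', Finset.sum_range_succ'] at h
    simp only [pow_zero, mul_one] at h
    have hf' : ∑ i ∈ range n, f (i+1) * d ^ (i+1) = d * ∑ i ∈ range n, f (i+1) * d ^ i := by
      rw [Finset.mul_sum]; apply Finset.sum_congr rfl; intro j _; ring
    have hg' : ∑ i ∈ range n, g (i+1) * d ^ (i+1) = d * ∑ i ∈ range n, g (i+1) * d ^ i := by
      rw [Finset.mul_sum]; apply Finset.sum_congr rfl; intro j _; ring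
    rw [hf', hg'] at h
    have h0 : f 0 = g 0 := by
      have hm := congrArg (· % d) h
      simp only [Nat.mul_add_mod] at hm
      rw [Nat.mod_eq_of_lt (hf 0 (by omega)), Nat.mod_eq_of_lt (hg 0 (by omega))] at hm
      exact hm
    have hsum : ∑ i ∈ range n, f (i+1) * d ^ i = ∑ i ∈ range n, g (i+1) * d ^ i := by
      have : d * ∑ i ∈ range n, f (i+1) * d ^ i = d * ∑ i ∈ range n, g (i+1) * d ^ i := by omega
      exact Nat.eq_of_mul_eq_mul_left (by omega) this
    rcases i with _ | j
    · exact h0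
    · exact ih (fun i => f (i+1)) (fun i => g (i+1))
        (fun i hi' => hf (i+1) (by omega)) (fun i hi' => hg (i+1) (by omega)) hsum j (by omega)

lemma exists_top' (d k : ℕ) (hd : 2 ≤ d) (α β : ℕ → ℕ)
    (hβ : ∀ i < k, β i < d)
    (hlt : ∑ i ∈ range k, α i * d ^ i < ∑ i ∈ range k, β i * d ^ i) :
    ∃ ℓ, ℓ < k ∧ α ℓ < β ℓ ∧ ∀ u, ℓ < u → u < k → α u = β u := by
  classical
  set S := (range k).filter (fun i => α i ≠ β i) with hS
  have hne : S.Nonempty := by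
    by_contra hcon
    rw [Finset.not_nonempty_iff_eq_empty, Finset.filter_eq_empty_iff] at hcon
    have : ∑ i ∈ range k, α i * d ^ i = ∑ i ∈ range k, β i * d ^ i := by
      apply Finset.sum_congr rfl
      intro i hi
      have : α i = β i := by have := hcon hi; omega
      rw [this]
    omega
  set ℓ := S.max' hne with hℓdef
  have hℓS : ℓ ∈ S := S.max'_mem hne
  have hℓk : ℓ < k := by
    have := Finset.mem_filter.mp hℓS
    exact Finset.mem_range.mp this.1
  have hne2 : α ℓ ≠ β ℓ := (Finset.mem_filter.mp hℓS).2
  have habove : ∀ u, ℓ < u → u < k → α u = β u := by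
    intro u hu huk
    by_contra hcon
    have : u ∈ S := Finset.mem_filter.mpr ⟨Finset.mem_range.mpr huk, hcon⟩
    have := Finset.le_max' S u this
    omega
  refine ⟨ℓ, hℓk, ?_, habove⟩
  by_contra hcon
  have hba : β ℓ < α ℓ := by omega
  have hsplit : ∀ f : ℕ → ℕ, ∑ i ∈ range k, f i * d ^ i =
      ∑ i ∈ range ℓ, f i * d ^ i + f ℓ * d ^ ℓ + ∑ i ∈ Ico (ℓ+1) k, f i * d ^ i := by
    intro f
    rw [Finset.range_eq_Ico, ← Finset.sum_Ico_consecutive _ (Nat.zero_le (ℓ+1)) (by omega : ℓ+1 ≤ k),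
      ← Finset.range_eq_Ico, Finset.sum_range_succ]
  rw [hsplit α, hsplit β] at hlt
  have htop : ∑ i ∈ Ico (ℓ+1) k, α i * d ^ i = ∑ i ∈ Ico (ℓ+1) k, β i * d ^ i := by
    apply Finset.sum_congr rfl
    intro i hi
    rw [habove i (Finset.mem_Ico.mp hi).1 (Finset.mem_Ico.mp hi).2]
  have hlow : ∑ i ∈ range ℓ, β i * d ^ i < d ^ ℓ :=
    sum_digits_lt' d hd ℓ β (fun i hi => hβ i (by omega))
  have hm : (β ℓ + 1) * d ^ ℓ ≤ α ℓ * d ^ ℓ := Nat.mul_le_mul_right _ (by omega)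
  have hadd : (β ℓ + 1) * d ^ ℓ = β ℓ * d ^ ℓ + d ^ ℓ := by ring
  omega



/-- if `α < β` then there is exactly one index `ℓ ∈ {0,…,k−1}` with
`m_ℓ = 0`, where `m_ℓ = r_ℓ · r_ℓ' · (concat_ℓ(β, s_ℓ) − concat_ℓ(α, w_ℓ))`. -/
theorem unique_zero_when_lt
    (b d k : ℕ) (hb : 2 ≤ b) (hd : 2 ≤ d) (hk : 1 ≤ k)
    (α β : ℕ → ℕ) (hα : ∀ i < k, α i < d) (hβ : ∀ i < k, β i < d)
    (s : ℕ → ℕ) (hs : ∀ ℓ < k, 1 ≤ s ℓ ∧ s ℓ < b ^ d ∧ ¬ b ∣ s ℓ)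
    (w : ℕ → ℕ) (hw : ∀ ℓ, w ℓ = (b ^ (d - α ℓ - 1 + β ℓ) + s ℓ) % b ^ d)
    (r r' : ℕ → ℤ) (hr : ∀ ℓ, r ℓ ≠ 0) (hr' : ∀ ℓ, r' ℓ ≠ 0)
    (m : ℕ → ℤ)
    (hm : ∀ ℓ, m ℓ = r ℓ * r' ℓ *
      (((s ℓ + b ^ d * ∑ u ∈ Finset.Ico (ℓ + 1) k, β u * d ^ (u - (ℓ + 1)) : ℕ) : ℤ) -
       ((w ℓ + b ^ d * ∑ u ∈ Finset.Ico (ℓ + 1) k, α u * d ^ (u - (ℓ + 1)) : ℕ) : ℤ)))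
    (hlt : (∑ i ∈ Finset.range k, α i * d ^ i) < (∑ i ∈ Finset.range k, β i * d ^ i)) :
    ∃! ℓ, ℓ < k ∧ m ℓ = 0 := by
  have hB0 : 0 < b ^ d := Nat.pow_pos (by omega)
  -- characterization of m ℓ = 0
  have key : ∀ ℓ, ℓ < k → (m ℓ = 0 ↔ (α ℓ < β ℓ ∧
      ∑ u ∈ Finset.Ico (ℓ+1) k, α u * d ^ (u-(ℓ+1)) =
      ∑ u ∈ Finset.Ico (ℓ+1) k, β u * d ^ (u-(ℓ+1)))) := by
    intro ℓ hℓ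
    obtain ⟨hs1, hs2, _⟩ := hs ℓ hℓ
    have hwlt : w ℓ < b ^ d := by rw [hw ℓ]; exact Nat.mod_lt _ hB0
    have hnat : m ℓ = 0 ↔
        (s ℓ + b ^ d * ∑ u ∈ Finset.Ico (ℓ+1) k, β u * d ^ (u-(ℓ+1)) =
         w ℓ + b ^ d * ∑ u ∈ Finset.Ico (ℓ+1) k, α u * d ^ (u-(ℓ+1))) := by
      rw [hm ℓ, mul_eq_zero, mul_eq_zero, sub_eq_zero, Nat.cast_inj]
      simp [hr ℓ, hr' ℓ]
    rw [hnat]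
    set Sa := ∑ u ∈ Finset.Ico (ℓ+1) k, α u * d ^ (u-(ℓ+1)) with hSa
    set Sb := ∑ u ∈ Finset.Ico (ℓ+1) k, β u * d ^ (u-(ℓ+1)) with hSb
    constructor
    · intro h
      have hsw : s ℓ = w ℓ := by
        have h2 := congrArg (· % b ^ d) h
        simp only [Nat.add_mul_mod_self_left] at h2
        rwa [Nat.mod_eq_of_lt hs2, Nat.mod_eq_of_lt hwlt] at h2
      have hSab : Sa = Sb := by
        have : b ^ d * Sb = b ^ d * Sa := by omega
        exact (Nat.eq_of_mul_eq_mul_left hB0 this).symm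
      refine ⟨?_, hSab⟩
      -- show α ℓ < β ℓ from s ℓ = w ℓ
      by_contra hcon
      push_neg at hcon
      have he : d - α ℓ - 1 + β ℓ < d := by
        have := hα ℓ hℓ; omega
      have hbe : b ^ (d - α ℓ - 1 + β ℓ) < b ^ d := Nat.pow_lt_pow_right (by omega) he
      have hbe1 : 1 ≤ b ^ (d - α ℓ - 1 + β ℓ) := Nat.one_le_pow _ _ (by omega)
      rw [hw ℓ] at hsw
      rcases Nat.lt_or_ge (b ^ (d - α ℓ - 1 + β ℓ) + s ℓ) (b ^ d) with hc | hc
      · rw [Nat.mod_eq_of_lt hc] at hsw; omega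
      · have h3 : (b ^ (d - α ℓ - 1 + β ℓ) + s ℓ) % b ^ d
            = b ^ (d - α ℓ - 1 + β ℓ) + s ℓ - b ^ d := by
          rw [Nat.mod_eq_sub_mod hc, Nat.mod_eq_of_lt (by omega)]
        rw [h3] at hsw; omega
    · rintro ⟨hab, hSab⟩
      have hsw : w ℓ = s ℓ := by
        rw [hw ℓ]
        have hde : d ≤ d - α ℓ - 1 + β ℓ := by have := hα ℓ hℓ; omega
        have hdvd : b ^ d ∣ b ^ (d - α ℓ - 1 + β ℓ) := pow_dvd_pow b hde
        have h0 : b ^ (d - α ℓ - 1 + β ℓ) % b ^ d = 0 :=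
          (Nat.dvd_iff_mod_eq_zero.mp hdvd)
        rw [Nat.add_mod, h0, Nat.zero_add, Nat.mod_mod, Nat.mod_eq_of_lt hs2]
      rw [hsw, hSab]
  -- existence
  obtain ⟨ℓ, hℓk, hℓab, hℓtop⟩ := exists_top' d k hd α β hβ hlt
  have hSmatch : ∀ ℓ' , ℓ' < k → (∀ u, ℓ' < u → u < k → α u = β u) →
      ∑ u ∈ Finset.Ico (ℓ'+1) k, α u * d ^ (u-(ℓ'+1)) =
      ∑ u ∈ Finset.Ico (ℓ'+1) k, β u * d ^ (u-(ℓ'+1)) := by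
    intro ℓ' _ htop
    apply Finset.sum_congr rfl
    intro u hu
    rw [htop u (Finset.mem_Ico.mp hu).1 (Finset.mem_Ico.mp hu).2]
  have hmain : m ℓ = 0 := (key ℓ hℓk).mpr ⟨hℓab, hSmatch ℓ hℓk hℓtop⟩
  refine ⟨ℓ, ⟨hℓk, hmain⟩, ?_⟩
  rintro ℓ' ⟨hℓ'k, hm'⟩
  obtain ⟨hab', hS'⟩ := (key ℓ' hℓ'k).mp hm'
  by_contra hne
  -- from Sα = Sβ at any zero index, digits above are equal
  have hdigits : ∀ j, j < k →
      (∑ u ∈ Finset.Ico (j+1) k, α u * d ^ (u-(j+1)) =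
       ∑ u ∈ Finset.Ico (j+1) k, β u * d ^ (u-(j+1))) →
      ∀ u, j < u → u < k → α u = β u := by
    intro j hjk hSeq u hju huk
    have hra : ∑ u ∈ Finset.Ico (j+1) k, α u * d ^ (u-(j+1)) =
        ∑ i ∈ Finset.range (k-(j+1)), α (j+1+i) * d ^ i := by
      rw [Finset.sum_Ico_eq_sum_range]
      apply Finset.sum_congr rfl
      intro i _
      have hi2 : j + 1 + i - (j + 1) = i := by omega
      rw [hi2]
    have hrb : ∑ u ∈ Finset.Ico (j+1) k, β u * d ^ (u-(j+1)) =
        ∑ i ∈ Finset.range (k-(j+1)), β (j+1+i) * d ^ i := by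
      rw [Finset.sum_Ico_eq_sum_range]
      apply Finset.sum_congr rfl
      intro i _
      have hi2 : j + 1 + i - (j + 1) = i := by omega
      rw [hi2]
    rw [hra, hrb] at hSeq
    have h2 : α (j+1+(u-(j+1))) = β (j+1+(u-(j+1))) :=
      digits_eq' d hd (k-(j+1)) (fun i => α (j+1+i)) (fun i => β (j+1+i))
        (fun i hi => hα (j+1+i) (by omega)) (fun i hi => hβ (j+1+i) (by omega)) hSeq
        (u - (j+1)) (by omega)
    have heq : j+1+(u-(j+1)) = u := by omega
    rwa [heq] at h2
  rcases Nat.lt_or_ge ℓ' ℓ with hc | hc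
  · have := hdigits ℓ' hℓ'k hS' ℓ (by omega) hℓk
    omega
  · have hc' : ℓ < ℓ' := by omega
    have hSℓ := hSmatch ℓ hℓk hℓtop
    have := hdigits ℓ hℓk hSℓ ℓ' hc' hℓ'k
    omega
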